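/- For a 1-parameter unfolding (m = 1), substantiality and weak substantiality coincide: F admits a liftable vector field η with dΛ(η) = Λ·u + q (u a unit, q ∈ 𝔪_Λ𝔪_{p+1}) if and only if F admits a projectable liftable vector field η whose component η_{p+1} satisfies η_{p+1}(0) = 0 and ∂η_{p+1}/∂Λ(0) ≠ 0; equivalently, Λ ∈ dΛ(Lift(F)) after multiplication by a unit. -/

import Mathlib

noncomputable section
namespace Stmt11Aux
open ContinuousMultilinearMap
open scoped NNReal ENNReal Topology
variable {p : ℕ}
abbrev EE (p : ℕ) := (Fin p → ℂ) × ℂ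
def Pr (p : ℕ) : EE p →L[ℂ] EE p := (ContinuousLinearMap.fst ℂ _ _).prod 0
def ev (p : ℕ) : EE p := (0, 1)
def A (p : ℕ) (n : ℕ) (i : Fin (n+1)) (j : Fin n) : EE p →L[ℂ] EE p :=
  if (j : ℕ) < (i : ℕ) then Pr p else ContinuousLinearMap.id ℂ (EE p)
def M (P : FormalMultilinearSeries ℂ (EE p) ℂ) (n : ℕ) (i : Fin (n+1)) :
    ContinuousMultilinearMap ℂ (fun _ : Fin n => EE p) ℂ :=
  (((P (n+1)).domDomCongr (i.cycleRange : Fin (n+1) ≃ Fin (n+1))).curryLeft (ev p)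
    ).compContinuousLinearMap (A p n i)

lemma norm_Pr_le : ‖Pr p‖ ≤ 1 := by
  refine ContinuousLinearMap.opNorm_le_bound _ zero_le_one (fun v => ?_)
  rw [one_mul]
  show ‖((v.1, 0) : EE p)‖ ≤ ‖v‖
  simp [Prod.norm_def]

lemma norm_ev : ‖ev p‖ = 1 := by
  simp [ev, Prod.norm_def]

lemma norm_A_le (n : ℕ) (i : Fin (n+1)) (j : Fin n) : ‖A p n i j‖ ≤ 1 := by
  rw [A]
  by_cases hj : (j : ℕ) < (i : ℕ)
  · rw [if_pos hj]; exact norm_Pr_le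
  · rw [if_neg hj]; exact ContinuousLinearMap.norm_id_le

lemma M_norm_le (P : FormalMultilinearSeries ℂ (EE p) ℂ) (n : ℕ) (i : Fin (n+1)) :
    ‖M P n i‖ ≤ ‖P (n+1)‖ := by
  refine (ContinuousMultilinearMap.norm_compContinuousLinearMap_le _ _).trans ?_
  calc ‖((P (n+1)).domDomCongr (i.cycleRange : Fin (n+1) ≃ Fin (n+1))).curryLeft (ev p)‖ *
        ∏ j : Fin n, ‖A p n i j‖
      ≤ (‖((P (n+1)).domDomCongr (i.cycleRange : Fin (n+1) ≃ Fin (n+1))).curryLeft‖ * ‖ev p‖) * 1 :=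
        mul_le_mul (ContinuousLinearMap.le_opNorm _ _)
          (Finset.prod_le_one (fun j _ => norm_nonneg _) (fun j _ => norm_A_le n i j))
          (Finset.prod_nonneg (fun j _ => norm_nonneg _)) (by positivity)
      _ ≤ ‖P (n+1)‖ := by
        rw [norm_ev, mul_one, mul_one, ContinuousMultilinearMap.curryLeft_norm,
          ContinuousMultilinearMap.norm_domDomCongr]

lemma A_apply (n : ℕ) (i : Fin (n+1)) (j : Fin n) (y : EE p) :
    A p n i j y = if (j : ℕ) < (i : ℕ) then Pr p y else y := by
  rw [A]; split <;> rfl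

lemma M_diag (P : FormalMultilinearSeries ℂ (EE p) ℂ) (n : ℕ) (i : Fin (n+1)) (y : EE p) :
    y.2 • M P n i (fun _ => y)
      = P (n+1) (fun j => if (j : ℕ) < (i : ℕ) then Pr p y else y)
        - P (n+1) (fun j => if (j : ℕ) < (i : ℕ) + 1 then Pr p y else y) := by
  classical
  set t : Fin (n+1) → EE p := fun j => if (j : ℕ) < (i : ℕ) then Pr p y else y with ht
  have hstep1 : M P n i (fun _ => y) = P (n+1) (Function.update t i (ev p)) := by
    rw [M, compContinuousLinearMap_apply, ContinuousMultilinearMap.curryLeft_apply,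
      ContinuousMultilinearMap.domDomCongr_apply]
    congr 1
    funext j
    rcases lt_trichotomy j i with hj | hj | hj
    · have hjn : (j : ℕ) < n := lt_of_lt_of_le hj (Fin.is_le i)
      have hsucc : j + 1 = Fin.succ ⟨(j : ℕ), hjn⟩ := by
        apply Fin.ext
        simp [Fin.val_add_one_of_lt (lt_of_lt_of_le hj (Fin.le_last i))]
      rw [Function.update_of_ne (ne_of_lt hj), Fin.cycleRange_of_lt hj, hsucc,
        Fin.cons_succ, A_apply]
    · rw [hj, Fin.cycleRange_self, Fin.cons_zero, Function.update_self]
    · have hj0 : j ≠ 0 := by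
        intro h
        rw [h] at hj
        exact (Fin.not_lt_zero i) hj
      have hval : (i : ℕ) < (j : ℕ) := Fin.lt_iff_val_lt_val.mp hj
      rw [Function.update_of_ne (ne_of_gt hj), Fin.cycleRange_of_gt hj,
        ← Fin.succ_pred j hj0, Fin.cons_succ, A_apply, Fin.succ_pred]
      simp only [ht, Fin.coe_pred]
      rw [if_neg (by omega), if_neg (by omega)]
  have hsmul : y.2 • ev p = y - Pr p y := by
    apply Prod.ext <;> simp [ev, Pr, Prod.smul_def]
  rw [hstep1, ← ContinuousMultilinearMap.map_update_smul, hsmul,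
    ContinuousMultilinearMap.map_update_sub]
  have h1 : Function.update t i y = t := by
    have : t i = y := by rw [ht]; simp
    conv_lhs => rw [← this]
    exact Function.update_eq_self i t
  have h2 : Function.update t i (Pr p y)
      = fun j : Fin (n+1) => if (j : ℕ) < (i : ℕ) + 1 then Pr p y else y := by
    funext j
    by_cases hji : j = i
    · rw [hji, Function.update_self, if_pos (Nat.lt_succ_self _)]
    · rw [Function.update_of_ne hji]
      have hne : (j : ℕ) ≠ (i : ℕ) := fun h => hji (Fin.ext h)
      show (if (j : ℕ) < (i : ℕ) then Pr p y else y) = _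
      by_cases hlt : (j : ℕ) < (i : ℕ)
      · rw [if_pos hlt, if_pos (Nat.lt_succ_of_lt hlt)]
      · rw [if_neg hlt, if_neg (by omega)]
  rw [h1, h2]

lemma Qsum_diag (P : FormalMultilinearSeries ℂ (EE p) ℂ) (n : ℕ) (y : EE p) :
    y.2 • ((∑ i : Fin (n+1), M P n i) (fun _ => y))
      = P (n+1) (fun _ => y) - P (n+1) (fun _ => Pr p y) := by
  rw [ContinuousMultilinearMap.sum_apply, Finset.smul_sum,
    Finset.sum_congr rfl (fun i _ => M_diag P n i y)]
  have key := Finset.sum_range_sub'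
    (f := fun k => P (n+1) (fun j => if (j : ℕ) < k then Pr p y else y)) (n+1)
  have e0 : (fun j : Fin (n+1) => if (j : ℕ) < 0 then Pr p y else y) = fun _ => y := by
    funext j; rw [if_neg (Nat.not_lt_zero _)]
  have e1 : (fun j : Fin (n+1) => if (j : ℕ) < n + 1 then Pr p y else y)
      = fun _ => Pr p y := by
    funext j; rw [if_pos j.isLt]
  rw [e0, e1] at key
  rw [Fin.sum_univ_eq_sum_range
    (fun k => P (n+1) (fun j => if (j : ℕ) < k then Pr p y else y)
      - P (n+1) (fun j => if (j : ℕ) < k + 1 then Pr p y else y)), key]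
theorem hadamard (f : EE p → ℂ) (hf : ContDiff ℂ ⊤ f) (h0 : ∀ x, f (x, 0) = 0) :
    ∃ g : EE p → ℂ, ContDiff ℂ ⊤ g ∧ ∀ v, f v = v.2 * g v := by
  classical
  set g : EE p → ℂ := fun v =>
    if v.2 = 0 then deriv (fun t : ℂ => f (v.1, t)) 0 else f v / v.2 with hgdef
  have hfg : ∀ v, f v = v.2 * g v := by
    intro v
    by_cases hv : v.2 = 0
    · have hv' : f v = 0 := by
        have : v = (v.1, (0:ℂ)) := by rw [← hv]
        rw [this]
        exact h0 v.1
      rw [hv', hv, zero_mul]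
    · rw [hgdef]
      simp only [if_neg hv]
      field_simp
  refine ⟨g, ?_, hfg⟩
  have hfa : AnalyticOnNhd ℂ f Set.univ := hf.analyticOnNhd
  have hdiff : Differentiable ℂ f := hf.differentiable (by simp)
  apply AnalyticOnNhd.contDiff (𝕜 := ℂ) (f := g)
  intro c _
  by_cases hc2 : c.2 = 0
  · -- hard case: c.2 = 0
    obtain ⟨P, hPa⟩ := hfa c trivial
    obtain ⟨r, hP⟩ := hPa
    obtain ⟨r₁, hr₁0, hr₁r⟩ : ∃ r₁ : ℝ≥0, 0 < r₁ ∧ (r₁ : ℝ≥0∞) < r := by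
      rcases ENNReal.lt_iff_exists_nnreal_btwn.mp hP.r_pos with ⟨q, hq0, hqr⟩
      exact ⟨q, by exact_mod_cast hq0, hqr⟩
    set Q : FormalMultilinearSeries ℂ (EE p) ℂ := fun n => ∑ i : Fin (n+1), M P n i with hQ
    obtain ⟨a, ⟨ha0, ha1⟩, C, hC0, hbound⟩ :=
      P.norm_mul_pow_le_mul_pow_of_lt_radius (lt_of_lt_of_le hr₁r hP.r_le)
    set r₂ : ℝ≥0 := r₁ / 2 with hr₂
    have hr₂0 : 0 < r₂ := by
      rw [hr₂]; positivity
    have hr₁0' : (0:ℝ) < (r₁:ℝ) := hr₁0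
    have hQsummable : Summable (fun n => ‖Q n‖ * (r₂:ℝ) ^ n) := by
      have hb0 : (0:ℝ) ≤ a / 2 := by positivity
      have hb1 : a / 2 < 1 := by nlinarith
      have hsum1 : Summable (fun n : ℕ => ((n:ℝ) + 1) * (a/2) ^ n) := by
        have h1 : Summable (fun n : ℕ => (n:ℝ) ^ 1 * (a/2) ^ n) :=
          summable_pow_mul_geometric_of_norm_lt_one 1 (by rwa [Real.norm_of_nonneg hb0])
        have h2 : Summable (fun n : ℕ => (a/2) ^ n) :=
          summable_geometric_of_lt_one hb0 hb1
        simpa [add_mul, pow_one] using h1.add h2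
      refine Summable.of_nonneg_of_le (fun n => by positivity) (fun n => ?_)
        (hsum1.mul_left (C * a / r₁))
      have hQn : ‖Q n‖ ≤ ((n:ℝ) + 1) * ‖P (n+1)‖ := by
        rw [hQ]
        refine (norm_sum_le _ _).trans ?_
        have := Finset.sum_le_sum (fun i (_ : i ∈ Finset.univ) => M_norm_le P n i)
        refine this.trans ?_
        simp [Finset.sum_const, Finset.card_univ]
      have hPn : ‖P (n+1)‖ * (r₁:ℝ) ^ (n+1) ≤ C * a ^ (n+1) := hbound (n+1)
      have hr2r : (r₂:ℝ) = (r₁:ℝ) / 2 := by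
        rw [hr₂]; push_cast; ring
      have hPn' : ‖P (n+1)‖ * (r₁:ℝ) ^ n ≤ C * a ^ (n+1) / r₁ := by
        rw [le_div_iff₀ hr₁0']
        calc ‖P (n+1)‖ * (r₁:ℝ) ^ n * r₁ = ‖P (n+1)‖ * (r₁:ℝ) ^ (n+1) := by ring
          _ ≤ C * a ^ (n+1) := hPn
      calc ‖Q n‖ * (r₂:ℝ) ^ n ≤ (((n:ℝ) + 1) * ‖P (n+1)‖) * (r₂:ℝ) ^ n := by
            have : (0:ℝ) ≤ (r₂:ℝ) ^ n := by positivity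
            exact mul_le_mul_of_nonneg_right hQn this
        _ = ((n:ℝ) + 1) * (‖P (n+1)‖ * (r₁:ℝ) ^ n) * (1/2:ℝ) ^ n := by
            rw [hr2r, div_pow, div_pow, one_pow]; ring
        _ ≤ ((n:ℝ) + 1) * (C * a ^ (n+1) / r₁) * (1/2:ℝ) ^ n := by
            have h2 : (0:ℝ) ≤ ((n:ℝ)+1) := by positivity
            have h3 : (0:ℝ) ≤ (1/2:ℝ) ^ n := by positivity
            exact mul_le_mul_of_nonneg_right (mul_le_mul_of_nonneg_left hPn' h2) h3
        _ = C * a / r₁ * (((n:ℝ) + 1) * (a/2) ^ n) := by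
            rw [div_pow, pow_succ, div_pow, one_pow]
            ring
    have hQr : (r₂ : ℝ≥0∞) ≤ Q.radius := Q.le_radius_of_summable_norm hQsummable
    set ρ : ℝ≥0∞ := min r (r₂ : ℝ≥0∞) with hρ
    have hρ0 : 0 < ρ := by
      rw [hρ]
      exact lt_min hP.r_pos (by exact_mod_cast hr₂0)
    have hρr : ρ ≤ r := min_le_left _ _
    have hρQ : ρ ≤ Q.radius := le_trans (min_le_right _ _) hQr
    have hkey : ∀ y : EE p, y ∈ EMetric.ball (0 : EE p) ρ → f (c + y) = y.2 * Q.sum y := by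
      intro y hy
      have hyr : y ∈ EMetric.ball (0 : EE p) r := EMetric.ball_subset_ball hρr hy
      have hyn : (‖y‖₊ : ℝ≥0∞) < ρ := by
        have := mem_eball_zero_iff.mp hy; rwa [enorm_eq_nnnorm] at this
      have hPrn : ‖Pr p y‖₊ ≤ ‖y‖₊ := by
        rw [← NNReal.coe_le_coe]
        show ‖((y.1, 0) : EE p)‖ ≤ ‖y‖
        simp [Prod.norm_def]
      have hPry : Pr p y ∈ EMetric.ball (0 : EE p) r := by
        refine mem_eball_zero_iff.mpr ?_; rw [enorm_eq_nnnorm]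
        exact lt_of_le_of_lt (by exact_mod_cast ENNReal.coe_le_coe.mpr hPrn)
          (lt_of_lt_of_le hyn hρr)
      have h1 := hP.hasSum hyr
      have h2 := hP.hasSum hPry
      have hc_Pr : f (c + Pr p y) = 0 := by
        have hcp : c + Pr p y = ((c.1 + y.1, (0:ℂ)) : EE p) := by
          apply Prod.ext
          · rfl
          · show c.2 + 0 = 0
            rw [hc2, add_zero]
        rw [hcp]
        exact h0 _
      rw [hc_Pr] at h2
      have h3 := h1.sub h2
      rw [← hasSum_nat_add_iff' 1] at h3
      have h3' : HasSum (fun n => P (n+1) (fun _ => y) - P (n+1) (fun _ => Pr p y))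
          (f (c + y)) := by
        have hP0 : (fun _ : Fin 0 => y) = (fun _ : Fin 0 => Pr p y) := by
          funext x; exact x.elim0
        have : f (c + y) - 0 - ∑ i ∈ Finset.range 1,
            ((P i fun _ => y) - P i fun _ => Pr p y) = f (c + y) := by
          rw [Finset.sum_range_one, hP0]
          simp
        rwa [this] at h3
      have hyQ : y ∈ EMetric.ball (0 : EE p) Q.radius :=
        EMetric.ball_subset_ball hρQ hy
      have h4 := (Q.hasSum hyQ).mul_left y.2
      have h5 : (fun n => y.2 * (Q n (fun _ => y)))
          = fun n => P (n+1) (fun _ => y) - P (n+1) (fun _ => Pr p y) := by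
        funext n
        have := Qsum_diag P n y
        rw [smul_eq_mul] at this
        exact this
      rw [h5] at h4
      exact (h4.unique h3').symm
    have hQball : HasFPowerSeriesOnBall Q.sum Q 0 Q.radius :=
      Q.hasFPowerSeriesOnBall (lt_of_lt_of_le hρ0 hρQ)
    have hG : HasFPowerSeriesOnBall (fun z => Q.sum (z - c)) Q c Q.radius := by
      have := hQball.comp_sub c
      rwa [zero_add] at this
    have hGA : AnalyticAt ℂ (fun z : EE p => Q.sum (z - c)) c := hG.analyticAt
    refine hGA.congr ?_
    have hball : EMetric.ball c ρ ∈ 𝓝 c :=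
      EMetric.isOpen_ball.mem_nhds (EMetric.mem_ball_self hρ0)
    filter_upwards [hball] with v hv
    have hvc : v - c ∈ EMetric.ball (0 : EE p) ρ := by
      refine mem_eball_zero_iff.mpr ?_; rw [← edist_eq_enorm_sub]
      exact hv
    have hcv : c + (v - c) = v := by abel
    have hid : f v = (v - c).2 * Q.sum (v - c) := by
      have := hkey (v - c) hvc
      rwa [hcv] at this
    have hsnd : (v - c).2 = v.2 := by
      rw [Prod.snd_sub, hc2, sub_zero]
    rw [hsnd] at hid
    by_cases hv2 : v.2 = 0
    · -- both sides are limits of f (v.1, t)/t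
      have hvv : v = ((v.1, (0:ℂ)) : EE p) := by rw [← hv2]
      have hdAt : DifferentiableAt ℂ (fun t : ℂ => f (v.1, t)) 0 := by
        have h1 : DifferentiableAt ℂ f ((v.1, (0:ℂ)) : EE p) := hdiff _
        have h2 : DifferentiableAt ℂ (fun t : ℂ => ((v.1, t) : EE p)) 0 :=
          (differentiableAt_const _).prodMk differentiableAt_id
        exact h1.comp 0 h2
      have L1 : Filter.Tendsto (fun t : ℂ => f (v.1, t) / t) (nhdsWithin 0 {(0:ℂ)}ᶜ)
          (nhds (deriv (fun t : ℂ => f (v.1, t)) 0)) := by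
        have hD := hdAt.hasDerivAt
        rw [hasDerivAt_iff_tendsto_slope] at hD
        refine hD.congr' ?_
        filter_upwards [self_mem_nhdsWithin] with t ht
        rw [slope_def_field, h0 v.1]
        simp [div_eq_mul_inv]
      have hcont : ContinuousAt (fun z : EE p => Q.sum (z - c)) v := by
        have hvball : v ∈ EMetric.ball c Q.radius := EMetric.ball_subset_ball hρQ hv
        exact (hG.continuousOn).continuousAt (EMetric.isOpen_ball.mem_nhds hvball)
      have hmap : Filter.Tendsto (fun t : ℂ => ((v.1, t) : EE p)) (nhds 0) (nhds v) := by
        rw [hvv]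
        exact (Continuous.prodMk_right v.1).tendsto 0
      have L2 : Filter.Tendsto (fun t : ℂ => f (v.1, t) / t) (nhdsWithin 0 {(0:ℂ)}ᶜ)
          (nhds (Q.sum (v - c))) := by
        have hten : Filter.Tendsto (fun t : ℂ => Q.sum (((v.1, t) : EE p) - c))
            (nhdsWithin 0 {(0:ℂ)}ᶜ) (nhds (Q.sum (v - c))) :=
          ((hcont.tendsto.comp hmap).mono_left nhdsWithin_le_nhds)
        refine hten.congr' ?_
        have hev : ∀ᶠ t : ℂ in nhdsWithin 0 {(0:ℂ)}ᶜ,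
            ((v.1, t) : EE p) ∈ EMetric.ball c ρ := by
          apply Filter.Eventually.filter_mono nhdsWithin_le_nhds
          have : {z : EE p | z ∈ EMetric.ball c ρ} ∈ nhds v :=
            EMetric.isOpen_ball.mem_nhds hv
          exact hmap.eventually this
        filter_upwards [hev, self_mem_nhdsWithin] with t htb htne
        have hidt := hkey (((v.1, t) : EE p) - c) (by
          refine mem_eball_zero_iff.mpr ?_; rw [← edist_eq_enorm_sub]
          exact htb)
        rw [show c + (((v.1, t) : EE p) - c) = ((v.1, t) : EE p) by abel] at hidt
        have hsnd2 : (((v.1, t) : EE p) - c).2 = t := by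
          rw [Prod.snd_sub, hc2, sub_zero]
        rw [hsnd2] at hidt
        rw [hidt]
        have htne' : t ≠ 0 := htne
        rw [mul_div_cancel_left₀ _ htne']
      have := tendsto_nhds_unique L2 L1
      rw [hgdef]
      simp only [if_pos hv2]
      exact this
    · rw [hgdef]
      simp only [if_neg hv2]
      rw [hid]
      field_simp
  · -- easy case: c.2 ≠ 0
    have h1 : AnalyticAt ℂ (fun v : EE p => f v / v.2) c := by
      refine (hfa c trivial).div ?_ hc2
      exact (ContinuousLinearMap.snd ℂ (Fin p → ℂ) ℂ).analyticAt c
    refine h1.congr ?_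
    have hopen : IsOpen {v : EE p | v.2 ≠ 0} :=
      isOpen_compl_singleton.preimage continuous_snd
    filter_upwards [hopen.mem_nhds hc2] with v hv
    rw [hgdef]
    simp only [if_neg hv]

end Stmt11Aux
end

/-- `η` is a (holomorphic) liftable vector field of the 1-parameter unfolding `F`. -/
def IsLiftable1 {n p : ℕ}
    (F : (Fin n → ℂ) × ℂ → (Fin p → ℂ) × ℂ)
    (η : (Fin p → ℂ) × ℂ → (Fin p → ℂ) × ℂ) : Prop :=
  ContDiff ℂ ⊤ η ∧ ∃ ξ : (Fin n → ℂ) × ℂ → (Fin n → ℂ) × ℂ,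
    ∀ v, fderiv ℂ F v (ξ v) = η (F v)

/-- `F` is substantial: some liftable `η` has `dΛ(η) = Λ·u + q` with `u` a unit
and `q ∈ 𝔪_Λ·𝔪_{p+1}`. -/
def IsSubstantial1 {n p : ℕ} (F : (Fin n → ℂ) × ℂ → (Fin p → ℂ) × ℂ) : Prop :=
  ∃ η, IsLiftable1 F η ∧
    ∃ u q : (Fin p → ℂ) × ℂ → ℂ, ContDiff ℂ ⊤ u ∧ u 0 ≠ 0 ∧
      (∃ h : (Fin p → ℂ) × ℂ → ℂ, ContDiff ℂ ⊤ h ∧ h 0 = 0 ∧ ∀ v, q v = v.2 * h v) ∧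
      ∀ v, (η v).2 = v.2 * u v + q v

/-- `F` is weakly substantial: some liftable projectable `η` has
`η_{p+1}(X,0) = 0` and `∂η_{p+1}/∂Λ(0) ≠ 0`. -/
def IsWeaklySubstantial1 {n p : ℕ} (F : (Fin n → ℂ) × ℂ → (Fin p → ℂ) × ℂ) : Prop :=
  ∃ η, IsLiftable1 F η ∧ (∀ X : Fin p → ℂ, (η (X, 0)).2 = 0) ∧
    deriv (fun t : ℂ => (η (0, t)).2) 0 ≠ 0

/-- For 1-parameter stable unfoldings, substantiality and weak substantiality
coincide. -/
theorem stmt_11 {n p : ℕ} (F : (Fin n → ℂ) × ℂ → (Fin p → ℂ) × ℂ)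
    (hF : Differentiable ℂ F) :
    IsSubstantial1 F ↔ IsWeaklySubstantial1 F := by
  constructor
  · rintro ⟨η, hη, u, q, hu, hu0, ⟨h, hh, hh0, hq⟩, heq⟩
    have hmap : DifferentiableAt ℂ
        (fun t : ℂ => (((0 : Fin p → ℂ), t) : (Fin p → ℂ) × ℂ)) 0 :=
      (differentiableAt_const _).prodMk differentiableAt_id
    have hud : DifferentiableAt ℂ (fun t : ℂ => u ((0 : Fin p → ℂ), t)) 0 :=
      ((hu.differentiable (by simp)) _).comp 0 hmap
    have hhd : DifferentiableAt ℂ (fun t : ℂ => h ((0 : Fin p → ℂ), t)) 0 :=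
      ((hh.differentiable (by simp)) _).comp 0 hmap
    have hder : HasDerivAt (fun t : ℂ => (η ((0 : Fin p → ℂ), t)).2)
        ((1 * u ((0 : Fin p → ℂ), 0) + 0 * deriv (fun t : ℂ => u ((0 : Fin p → ℂ), t)) 0)
          + (1 * h ((0 : Fin p → ℂ), 0) + 0 * deriv (fun t : ℂ => h ((0 : Fin p → ℂ), t)) 0)) 0 := by
      have h1 : HasDerivAt (fun t : ℂ => t * u ((0 : Fin p → ℂ), t))
          (1 * u ((0 : Fin p → ℂ), 0) + 0 * deriv (fun t : ℂ => u ((0 : Fin p → ℂ), t)) 0) 0 :=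
        (hasDerivAt_id 0).mul hud.hasDerivAt
      have h2 : HasDerivAt (fun t : ℂ => t * h ((0 : Fin p → ℂ), t))
          (1 * h ((0 : Fin p → ℂ), 0) + 0 * deriv (fun t : ℂ => h ((0 : Fin p → ℂ), t)) 0) 0 :=
        (hasDerivAt_id 0).mul hhd.hasDerivAt
      have h3 := h1.add h2
      refine HasDerivAt.congr_of_eventuallyEq h3 ?_
      filter_upwards with t
      rw [heq ((0 : Fin p → ℂ), t), hq ((0 : Fin p → ℂ), t)]
      rfl
    refine ⟨η, hη, ?_, ?_⟩
    · intro X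
      rw [heq (X, (0:ℂ)), hq (X, (0:ℂ))]
      show (0:ℂ) * u (X, 0) + (0:ℂ) * h (X, 0) = 0
      ring
    · rw [hder.deriv]
      have hzz : (((0 : Fin p → ℂ), (0:ℂ)) : (Fin p → ℂ) × ℂ) = 0 := rfl
      rw [hzz, hh0]
      simpa using hu0
  · rintro ⟨η, hη, hz, hd⟩
    have hf : ContDiff ℂ ⊤ (fun v : (Fin p → ℂ) × ℂ => (η v).2) :=
      contDiff_snd.comp hη.1
    obtain ⟨g, hg, hfg⟩ := Stmt11Aux.hadamard (p := p)
      (fun v => (η v).2) hf (fun x => hz x)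
    have hmap : DifferentiableAt ℂ
        (fun t : ℂ => (((0 : Fin p → ℂ), t) : (Fin p → ℂ) × ℂ)) 0 :=
      (differentiableAt_const _).prodMk differentiableAt_id
    have hgd : DifferentiableAt ℂ (fun t : ℂ => g ((0 : Fin p → ℂ), t)) 0 :=
      ((hg.differentiable (by simp)) _).comp 0 hmap
    have hder : HasDerivAt (fun t : ℂ => (η ((0 : Fin p → ℂ), t)).2)
        (1 * g ((0 : Fin p → ℂ), 0) + 0 * deriv (fun t : ℂ => g ((0 : Fin p → ℂ), t)) 0) 0 := by
      have h1 : HasDerivAt (fun t : ℂ => t * g ((0 : Fin p → ℂ), t))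
          (1 * g ((0 : Fin p → ℂ), 0) + 0 * deriv (fun t : ℂ => g ((0 : Fin p → ℂ), t)) 0) 0 :=
        (hasDerivAt_id 0).mul hgd.hasDerivAt
      refine HasDerivAt.congr_of_eventuallyEq h1 ?_
      filter_upwards with t
      exact hfg ((0 : Fin p → ℂ), t)
    have hg0 : g 0 ≠ 0 := by
      have := hder.deriv
      rw [this] at hd
      have hzz : (((0 : Fin p → ℂ), (0:ℂ)) : (Fin p → ℂ) × ℂ) = 0 := rfl
      rw [hzz] at hd
      intro hcon
      apply hd
      rw [hcon]
      ring
    refine ⟨η, hη, fun _ => g 0, fun v => v.2 * (g v - g 0), contDiff_const, hg0,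
      ⟨fun v => g v - g 0, hg.sub contDiff_const, by ring, fun v => rfl⟩, fun v => ?_⟩
    rw [hfg v]
    ring
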